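/- Let F be C¹ on Γ₊ ⊂ ℝⁿ satisfying ((∂F/∂κᵢ)κᵢ² − (∂F/∂κⱼ)κⱼ²)(κᵢ − κⱼ) ≥ 0 for all i ≠ j (Condition iii). Then for κ ∈ Γ₊ and any symmetric array (h_{ijp}) of reals (indices in {1,…,n}), ∑ₚ κₚ⁻² ∑_{i≠j} ((∂F/∂κᵢ) − (∂F/∂κⱼ))(κᵢ − κⱼ)⁻¹ h_{ijp}² + 2∑_{i,q: q≠i} ∑ₚ (∂F/∂κᵢ) κₚ⁻² κ_q⁻¹ h_{pqi}² ≥ 0, where sums over i ≠ j with κᵢ = κⱼ are interpreted via the limit (∂²F terms) and may be taken ≥ 0 by assumption. -/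

import Mathlib

open Finset

noncomputable def pd {n : ℕ} (F : (Fin n → ℝ) → ℝ) (κ : Fin n → ℝ) (i : Fin n) : ℝ :=
  fderiv ℝ F κ (Pi.single i 1)

/-- inequality (4.3) (cond3) of Section 4.  For `F` `C¹` on the positive cone
satisfying condition iii) `((∂F/∂κᵢ)κᵢ² − (∂F/∂κⱼ)κⱼ²)(κᵢ − κⱼ) ≥ 0`, `κ` with pairwise
distinct positive entries, and a fully symmetric array `h`,
`∑ₚ κₚ⁻² ∑_{i≠j} ((∂F/∂κᵢ) − (∂F/∂κⱼ))(κᵢ−κⱼ)⁻¹ h_{ijp}²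
 + 2 ∑_{i} ∑_{q≠i} ∑ₚ (∂F/∂κᵢ) κₚ⁻² κ_q⁻¹ h_{pqi}² ≥ 0`. -/
theorem stmt14 {n : ℕ}
    (Γ : Set (Fin n → ℝ)) (hΓ : Γ = {κ | ∀ i, 0 < κ i})
    (F : (Fin n → ℝ) → ℝ)
    (hC1 : ContDiffOn ℝ 1 F Γ)
    (hiii : ∀ κ ∈ Γ, ∀ i j, i ≠ j →
      0 ≤ (pd F κ i * (κ i) ^ 2 - pd F κ j * (κ j) ^ 2) * (κ i - κ j)) :
    ∀ κ ∈ Γ, (∀ i j : Fin n, i ≠ j → κ i ≠ κ j) →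
      ∀ h : Fin n → Fin n → Fin n → ℝ,
        (∀ i j p, h i j p = h j i p) → (∀ i j p, h i j p = h i p j) →
        0 ≤ (∑ p, ((κ p)⁻¹) ^ 2 *
              ∑ i, ∑ j ∈ Finset.univ.erase i,
                (pd F κ i - pd F κ j) * (κ i - κ j)⁻¹ * (h i j p) ^ 2)
            + 2 * ∑ i, ∑ q ∈ Finset.univ.erase i, ∑ p,
                pd F κ i * ((κ p)⁻¹) ^ 2 * (κ q)⁻¹ * (h p q i) ^ 2 := by
  intro κ hκ hdist h hsym1 hsym2
  have hpos : ∀ i, 0 < κ i := by rw [hΓ] at hκ; exact hκ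
  set f : Fin n → ℝ := pd F κ with hf
  have hsym3 : ∀ p q i, (h p q i) ^ 2 = (h i q p) ^ 2 := by
    intro p q i
    rw [hsym1 p q i, hsym2 q p i, hsym1 q i p]
  -- the "good" termwise-nonnegative quantity
  set G : Fin n → Fin n → Fin n → ℝ := fun i j p =>
    (f i * κ i ^ 2 - f j * κ j ^ 2) * (κ i - κ j)⁻¹ * (κ i)⁻¹ * (κ j)⁻¹ * (h i j p) ^ 2
    with hG
  have hid : ∀ i j, j ≠ i → ∀ p,
      (f i - f j) * (κ i - κ j)⁻¹ * (h i j p) ^ 2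
        = G i j p - f i * (κ j)⁻¹ * (h i j p) ^ 2 - f j * (κ i)⁻¹ * (h i j p) ^ 2 := by
    intro i j hij p
    have h1 : κ i ≠ 0 := (hpos i).ne'
    have h2 : κ j ≠ 0 := (hpos j).ne'
    have h3 : κ i - κ j ≠ 0 := sub_ne_zero.mpr (hdist i j (Ne.symm hij))
    rw [hG]
    field_simp
    ring
  -- swapping the two indices in a double sum over distinct pairs
  have swap : ∀ g : Fin n → Fin n → ℝ,
      ∑ i, ∑ j ∈ Finset.univ.erase i, g i j = ∑ i, ∑ j ∈ Finset.univ.erase i, g j i := by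
    intro g
    exact Finset.sum_comm' (by intro x y; simp [Finset.mem_erase, ne_comm])
  set T1 : ℝ := ∑ p, ((κ p)⁻¹) ^ 2 *
      ∑ i, ∑ j ∈ Finset.univ.erase i, f i * (κ j)⁻¹ * (h i j p) ^ 2 with hT1
  set T2 : ℝ := ∑ p, ((κ p)⁻¹) ^ 2 *
      ∑ i, ∑ j ∈ Finset.univ.erase i, f j * (κ i)⁻¹ * (h i j p) ^ 2 with hT2
  set Gs : ℝ := ∑ p, ((κ p)⁻¹) ^ 2 *
      ∑ i, ∑ j ∈ Finset.univ.erase i, G i j p with hGs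
  -- (a) first sum = Gs - T1 - T2
  have ha : (∑ p, ((κ p)⁻¹) ^ 2 *
        ∑ i, ∑ j ∈ Finset.univ.erase i,
          (f i - f j) * (κ i - κ j)⁻¹ * (h i j p) ^ 2) = Gs - T1 - T2 := by
    rw [hGs, hT1, hT2, ← Finset.sum_sub_distrib, ← Finset.sum_sub_distrib]
    refine Finset.sum_congr rfl fun p _ => ?_
    rw [← mul_sub, ← mul_sub, ← Finset.sum_sub_distrib, ← Finset.sum_sub_distrib]
    congr 1
    refine Finset.sum_congr rfl fun i _ => ?_
    rw [← Finset.sum_sub_distrib, ← Finset.sum_sub_distrib]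
    refine Finset.sum_congr rfl fun j hj => ?_
    exact hid i j (Finset.ne_of_mem_erase hj) p
  -- (b) T1 = T2
  have hb : T1 = T2 := by
    rw [hT1, hT2]
    refine Finset.sum_congr rfl fun p _ => ?_
    congr 1
    rw [swap (fun i j => f i * (κ j)⁻¹ * (h i j p) ^ 2)]
    refine Finset.sum_congr rfl fun i _ => Finset.sum_congr rfl fun j _ => ?_
    rw [hsym1 j i p]
  -- (c) the second sum equals T1
  have hc : (∑ i, ∑ q ∈ Finset.univ.erase i, ∑ p,
        f i * ((κ p)⁻¹) ^ 2 * (κ q)⁻¹ * (h p q i) ^ 2) = T1 := by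
    have step1 : (∑ i, ∑ q ∈ Finset.univ.erase i, ∑ p,
          f i * ((κ p)⁻¹) ^ 2 * (κ q)⁻¹ * (h p q i) ^ 2)
        = ∑ p, ∑ i, ∑ q ∈ Finset.univ.erase i,
            f i * ((κ p)⁻¹) ^ 2 * (κ q)⁻¹ * (h i q p) ^ 2 := by
      rw [Finset.sum_comm]
      refine Finset.sum_congr rfl fun i _ => ?_
      rw [Finset.sum_comm]
      refine Finset.sum_congr rfl fun p _ => Finset.sum_congr rfl fun q _ => ?_
      rw [hsym3 p q i]
    rw [step1, hT1]
    refine Finset.sum_congr rfl fun p _ => ?_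
    rw [Finset.mul_sum]
    refine Finset.sum_congr rfl fun i _ => ?_
    rw [Finset.mul_sum]
    refine Finset.sum_congr rfl fun q _ => ?_
    ring
  -- (d) 0 ≤ Gs
  have hd : 0 ≤ Gs := by
    refine Finset.sum_nonneg fun p _ => mul_nonneg (sq_nonneg _) ?_
    refine Finset.sum_nonneg fun i _ => Finset.sum_nonneg fun j hj => ?_
    have hij : i ≠ j := Ne.symm (Finset.ne_of_mem_erase hj)
    have h0 := hiii κ hκ i j hij
    have h3 : κ i - κ j ≠ 0 := sub_ne_zero.mpr (hdist i j hij)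
    have hbase : 0 ≤ (f i * κ i ^ 2 - f j * κ j ^ 2) * (κ i - κ j)⁻¹ := by
      have : (f i * κ i ^ 2 - f j * κ j ^ 2) * (κ i - κ j)⁻¹
          = ((f i * κ i ^ 2 - f j * κ j ^ 2) * (κ i - κ j)) * ((κ i - κ j)⁻¹) ^ 2 := by
        field_simp
      rw [this]
      exact mul_nonneg h0 (sq_nonneg _)
    rw [hG]
    have hki : 0 ≤ (κ i)⁻¹ := (inv_nonneg).mpr (hpos i).le
    have hkj : 0 ≤ (κ j)⁻¹ := (inv_nonneg).mpr (hpos j).le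
    exact mul_nonneg (mul_nonneg (mul_nonneg hbase hki) hkj) (sq_nonneg _)
  rw [ha, ← hc]
  rw [hc]
  linarith
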